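/- Let G be a finite group, p a prime, S a Sylow p-subgroup of G, and X, Y normal subgroups of G. Then S ∩ (XY) = (S ∩ X)(S ∩ Y). -/

import Mathlib

open scoped Pointwise

open Subgroup

-- `relindex` times the card of the intersection is the card of the base.
lemma aux_relindex_mul_card {G : Type*} [Group G] [Finite G] (M K : Subgroup G) :
    M.relIndex K * Nat.card ↥(M ⊓ K) = Nat.card ↥K := by
  have h := Subgroup.index_mul_card (M.subgroupOf K)
  have hc : Nat.card ↥(M.subgroupOf K) = Nat.card ↥(M ⊓ K) := by
    rw [← Subgroup.inf_subgroupOf_right]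
    exact Nat.card_congr (Subgroup.subgroupOfEquivOfLe inf_le_right).toEquiv
  rw [Subgroup.relIndex, ← hc, h]

lemma aux_card_sup_mul_card_inf {G : Type*} [Group G] [Finite G] (H N : Subgroup G)
    [N.Normal] :
    Nat.card ↥(H ⊔ N) * Nat.card ↥(N ⊓ H) = Nat.card ↥H * Nat.card ↥N := by
  have h1 : N.relIndex (H ⊔ N) = N.relIndex H := Subgroup.relIndex_sup_right H N
  have e1 := aux_relindex_mul_card N (H ⊔ N)
  have e2 := aux_relindex_mul_card N H
  rw [inf_of_le_left le_sup_right] at e1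
  calc Nat.card ↥(H ⊔ N) * Nat.card ↥(N ⊓ H)
      = N.relIndex (H ⊔ N) * Nat.card ↥N * Nat.card ↥(N ⊓ H) := by rw [e1]
    _ = (N.relIndex H * Nat.card ↥(N ⊓ H)) * Nat.card ↥N := by rw [h1]; ring
    _ = Nat.card ↥H * Nat.card ↥N := by rw [e2]

-- `S ⊓ N` is a Sylow subgroup of a normal subgroup `N`, cardinality version.
lemma aux_sylow_inf_card {G : Type*} [Group G] [Finite G] {p : ℕ} [Fact p.Prime]
    (S : Sylow p G) (N : Subgroup G) [N.Normal] :
    Nat.card ↥((S : Subgroup G) ⊓ N) = p ^ ((Nat.card ↥N).factorization p) := by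
  obtain ⟨n, hn⟩ := IsPGroup.iff_card.mp (S.isPGroup'.to_inf_left (K := N))
  -- relindices
  have e1 := aux_relindex_mul_card (S : Subgroup G) (S ⊔ N)
  rw [inf_of_le_left le_sup_left] at e1
  have e2 := aux_relindex_mul_card ((S : Subgroup G) ⊓ N) N
  rw [inf_of_le_left inf_le_right] at e2
  have e3 := aux_card_sup_mul_card_inf (S : Subgroup G) N
  have hpos : 0 < Nat.card ↥(S : Subgroup G) * Nat.card ↥((S : Subgroup G) ⊓ N) :=
    Nat.mul_pos Nat.card_pos Nat.card_pos
  have hEq : (S : Subgroup G).relIndex ((S : Subgroup G) ⊔ N)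
      = ((S : Subgroup G) ⊓ N).relIndex N := by
    have : (S : Subgroup G).relIndex ((S : Subgroup G) ⊔ N) *
        (Nat.card ↥(S : Subgroup G) * Nat.card ↥((S : Subgroup G) ⊓ N))
        = ((S : Subgroup G) ⊓ N).relIndex N *
        (Nat.card ↥(S : Subgroup G) * Nat.card ↥((S : Subgroup G) ⊓ N)) := by
      calc (S : Subgroup G).relIndex ((S : Subgroup G) ⊔ N) *
            (Nat.card ↥(S : Subgroup G) * Nat.card ↥((S : Subgroup G) ⊓ N))
          = Nat.card ↥((S : Subgroup G) ⊔ N) * Nat.card ↥((S : Subgroup G) ⊓ N) := by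
            rw [← e1]; ring
        _ = Nat.card ↥((S : Subgroup G) ⊔ N) * Nat.card ↥(N ⊓ (S : Subgroup G)) := by
            rw [inf_comm]
        _ = Nat.card ↥(S : Subgroup G) * Nat.card ↥N := e3
        _ = _ := by rw [← e2]; ring
    exact Nat.eq_of_mul_eq_mul_right hpos this
  have hnd : ¬ p ∣ ((S : Subgroup G) ⊓ N).relIndex N := by
    rw [← hEq]
    intro hdvd
    exact S.not_dvd_index (hdvd.trans (Subgroup.relIndex_dvd_index_of_le le_sup_left))
  -- conclude via factorizations
  have hr0 : ((S : Subgroup G) ⊓ N).relIndex N ≠ 0 := by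
    intro h0; rw [h0, zero_mul] at e2; exact Nat.card_pos.ne' e2.symm
  have hv : (Nat.card ↥N).factorization p = n := by
    rw [← e2, hn, Nat.factorization_mul hr0 (pow_ne_zero n (Fact.out : p.Prime).pos.ne')]
    simp [Nat.factorization_eq_zero_of_not_dvd hnd,
      Nat.Prime.factorization_pow (Fact.out : p.Prime)]
  rw [hn, hv]

/-- if `S` is a Sylow `p`-subgroup of a finite group `G` and `X`, `Y` are
normal subgroups of `G`, then `S ∩ (XY) = (S ∩ X)(S ∩ Y)`. -/
theorem sylow_inter_mul {G : Type*} [Group G] [Finite G] {p : ℕ} [Fact p.Prime]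
    (S : Sylow p G) (X Y : Subgroup G) (hX : X.Normal) (hY : Y.Normal) :
    ((S : Subgroup G) : Set G) ∩ ((X : Set G) * (Y : Set G)) =
      (((S : Subgroup G) : Set G) ∩ (X : Set G)) * (((S : Subgroup G) : Set G) ∩ (Y : Set G)) := by
  haveI := hX; haveI := hY
  -- subgroups of S
  set A := X.subgroupOf (S : Subgroup G) with hA
  set B := Y.subgroupOf (S : Subgroup G) with hB
  haveI : A.Normal := hX.subgroupOf _
  haveI : B.Normal := hY.subgroupOf _
  -- the product set identity
  have hAB : ((A ⊔ B : Subgroup ↥(S : Subgroup G)) : Set ↥(S : Subgroup G))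
      = (A : Set ↥(S : Subgroup G)) * (B : Set ↥(S : Subgroup G)) := Subgroup.mul_normal A B
  have hmap : ((A ⊔ B).map (S : Subgroup G).subtype : Set G)
      = (((S : Subgroup G) ⊓ X : Subgroup G) : Set G) * (((S : Subgroup G) ⊓ Y : Subgroup G) : Set G) := by
    rw [Subgroup.coe_map, hAB, Set.image_mul, ← Subgroup.coe_map, ← Subgroup.coe_map,
      hA, hB, Subgroup.subgroupOf_map_subtype, Subgroup.subgroupOf_map_subtype,
      inf_comm X, inf_comm Y]
  have hsupmap : (A ⊔ B).map (S : Subgroup G).subtype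
      = ((S : Subgroup G) ⊓ X) ⊔ ((S : Subgroup G) ⊓ Y) := by
    rw [Subgroup.map_sup, hA, hB, Subgroup.subgroupOf_map_subtype, Subgroup.subgroupOf_map_subtype,
      inf_comm X, inf_comm Y]
  -- card computations
  have cardA : Nat.card ↥A = Nat.card ↥((S : Subgroup G) ⊓ X) := by
    rw [hA, ← Subgroup.inf_subgroupOf_right, inf_comm X]
    exact Nat.card_congr (Subgroup.subgroupOfEquivOfLe inf_le_left).toEquiv
  have cardB : Nat.card ↥B = Nat.card ↥((S : Subgroup G) ⊓ Y) := by
    rw [hB, ← Subgroup.inf_subgroupOf_right, inf_comm Y]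
    exact Nat.card_congr (Subgroup.subgroupOfEquivOfLe inf_le_left).toEquiv
  have cardSup : Nat.card ↥(A ⊔ B) = Nat.card ↥(((S : Subgroup G) ⊓ X) ⊔ ((S : Subgroup G) ⊓ Y)) := by
    rw [← hsupmap]
    exact Nat.card_congr ((A ⊔ B).equivMapOfInjective _ (S : Subgroup G).subtype_injective).toEquiv
  have cardInf : Nat.card ↥(B ⊓ A) = Nat.card ↥((S : Subgroup G) ⊓ (Y ⊓ X)) := by
    have : B ⊓ A = (Y ⊓ X).subgroupOf (S : Subgroup G) := by
      rw [hA, hB, Subgroup.subgroupOf, Subgroup.subgroupOf, Subgroup.subgroupOf,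
        Subgroup.comap_inf]
    rw [this, ← Subgroup.inf_subgroupOf_right, inf_comm (Y ⊓ X)]
    exact Nat.card_congr (Subgroup.subgroupOfEquivOfLe inf_le_left).toEquiv
  -- Sylow card facts
  haveI : (X ⊔ Y).Normal := Subgroup.sup_normal X Y
  haveI : (Y ⊓ X).Normal := Subgroup.normal_inf_normal Y X
  have hvX := aux_sylow_inf_card S X
  have hvY := aux_sylow_inf_card S Y
  have hvXY := aux_sylow_inf_card S (X ⊔ Y)
  have hvI := aux_sylow_inf_card S (Y ⊓ X)
  -- valuation identity
  have hcardmul := aux_card_sup_mul_card_inf X Y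
  have hXne : Nat.card ↥(X ⊔ Y) ≠ 0 := Nat.card_pos.ne'
  have hIne : Nat.card ↥(Y ⊓ X) ≠ 0 := Nat.card_pos.ne'
  have hvadd : (Nat.card ↥(X ⊔ Y)).factorization p + (Nat.card ↥(Y ⊓ X)).factorization p
      = (Nat.card ↥X).factorization p + (Nat.card ↥Y).factorization p := by
    have := congrArg (fun m : ℕ →₀ ℕ => m p)
      (Nat.factorization_mul hXne hIne)
    rw [hcardmul, Nat.factorization_mul Nat.card_pos.ne' Nat.card_pos.ne'] at this
    simpa using this.symm
  -- the two p-groups have equal cards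
  have hsupInf := aux_card_sup_mul_card_inf A B
  rw [cardA, cardB, cardSup, cardInf, hvX, hvY, hvI] at hsupInf
  have hcards : Nat.card ↥(((S : Subgroup G) ⊓ X) ⊔ ((S : Subgroup G) ⊓ Y))
      = Nat.card ↥((S : Subgroup G) ⊓ (X ⊔ Y)) := by
    rw [hvXY]
    refine Nat.eq_of_mul_eq_mul_right (Nat.pos_of_ne_zero ?_)
      (hsupInf.trans ?_)
    · exact pow_ne_zero _ (Fact.out : p.Prime).pos.ne'
    rw [← pow_add, ← pow_add, hvadd]
  -- the subgroup equality
  have hle : ((S : Subgroup G) ⊓ X) ⊔ ((S : Subgroup G) ⊓ Y) ≤ (S : Subgroup G) ⊓ (X ⊔ Y) :=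
    sup_le (le_inf inf_le_left (inf_le_right.trans le_sup_left))
      (le_inf inf_le_left (inf_le_right.trans le_sup_right))
  have hmain : ((S : Subgroup G) ⊓ X) ⊔ ((S : Subgroup G) ⊓ Y) = (S : Subgroup G) ⊓ (X ⊔ Y) :=
    Subgroup.eq_of_le_of_card_ge hle hcards.ge
  -- finish
  calc ((S : Subgroup G) : Set G) ∩ ((X : Set G) * (Y : Set G))
      = (((S : Subgroup G) ⊓ (X ⊔ Y) : Subgroup G) : Set G) := by
        rw [Subgroup.coe_inf, Subgroup.mul_normal X Y]
    _ = (((A ⊔ B).map (S : Subgroup G).subtype : Subgroup G) : Set G) := by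
        rw [hsupmap, hmain]
    _ = _ := by
        rw [hmap, Subgroup.coe_inf, Subgroup.coe_inf]
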